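/- Let x, y ∈ K^{2n} be vectors over a field K with non-Archimedean valuation val, with coordinates indexed by 1,…,n,1̄,…,n̄, such that ω(x,y) = Σ_{i=1}^n (x_i y_{ī} − x_{ī} y_i) = 0. Then the tropicalizations val(x), val(y) ∈ T^{2n} are tropically orthogonal: the minimum of val(x)_i + val(y)_{ī} over i ∈ [2n] is attained at least twice or equals ∞. -/

import Mathlib

/-- The minimum of `f` is attained at least twice, or `f` is identically `∞`. -/
def AAT {ι : Type*} (f : ι → WithTop ℝ) : Prop :=
  (∀ i, f i = ⊤) ∨ ∃ i j, i ≠ j ∧ f i = f j ∧ ∀ l, f i ≤ f l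

/-- If `ω(x, y) = 0` for the standard symplectic form, then the tropicalizations of `x` and
`y` are tropically orthogonal. -/
theorem symplectic_orthogonal_tropicalizes {K : Type*} [Field K]
    (v : K → WithTop ℝ)
    (hmul : ∀ x y : K, v (x * y) = v x + v y)
    (hadd : ∀ x y : K, min (v x) (v y) ≤ v (x + y))
    (hzero : v 0 = ⊤)
    {n : ℕ} (x y : Fin n ⊕ Fin n → K)
    (hω : ∑ i : Fin n, (x (Sum.inl i) * y (Sum.inr i) - x (Sum.inr i) * y (Sum.inl i)) = 0) :
    AAT (fun l : Fin n ⊕ Fin n => v (x l) + v (y (Sum.swap l))) := by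
  set f : Fin n ⊕ Fin n → WithTop ℝ := fun l => v (x l) + v (y (Sum.swap l)) with hf
  by_cases h1 : v 1 = ⊤
  · -- then v is identically ⊤
    have hall : ∀ a : K, v a = ⊤ := by
      intro a
      have := hmul a 1
      rw [mul_one, h1, add_top] at this
      exact this
    left
    intro l
    simp [hf, hall]
  · -- v 1 = 0
    obtain ⟨a, ha⟩ : ∃ a : ℝ, v 1 = (a : WithTop ℝ) := by
      rcases WithTop.ne_top_iff_exists.mp h1 with ⟨a, ha⟩
      exact ⟨a, ha.symm⟩
    have h11 : v 1 + v 1 = v 1 := by rw [← hmul, one_mul]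
    have hv1 : v 1 = 0 := by
      rw [ha] at h11 ⊢
      have : (a + a : ℝ) = a := by exact_mod_cast h11
      have : a = 0 := by linarith
      exact_mod_cast this
    have hm1ne : v (-1 : K) ≠ ⊤ := by
      intro h
      have := hmul (-1 : K) (-1)
      rw [neg_mul_neg, one_mul, hv1, h, top_add] at this
      exact h1 (hv1 ▸ this.symm ▸ rfl)
    have hvm1 : v (-1 : K) = 0 := by
      have h2 : v (-1 : K) + v (-1 : K) = 0 := by
        rw [← hmul, neg_mul_neg, one_mul, hv1]
      obtain ⟨b, hb⟩ : ∃ b : ℝ, v (-1 : K) = (b : WithTop ℝ) := by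
        rcases WithTop.ne_top_iff_exists.mp hm1ne with ⟨b, hb⟩
        exact ⟨b, hb.symm⟩
      rw [hb] at h2 ⊢
      have : (b + b : ℝ) = 0 := by exact_mod_cast h2
      have : b = 0 := by linarith
      exact_mod_cast this
    have hvn : ∀ a : K, v (-a) = v a := by
      intro a
      have : (-a : K) = (-1) * a := by ring
      rw [this, hmul, hvm1, zero_add]
    -- the terms of the symplectic sum
    set t : Fin n ⊕ Fin n → K :=
      Sum.elim (fun i => x (Sum.inl i) * y (Sum.inr i))
        (fun i => -(x (Sum.inr i) * y (Sum.inl i))) with ht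
    have hsum : ∑ l : Fin n ⊕ Fin n, t l = 0 := by
      rw [Fintype.sum_sum_type]
      simp only [ht, Sum.elim_inl, Sum.elim_inr]
      rw [Finset.sum_neg_distrib, ← sub_eq_add_neg, ← Finset.sum_sub_distrib]
      exact hω
    have hft : ∀ l, f l = v (t l) := by
      intro l
      cases l with
      | inl i => simp [hf, ht, hmul]
      | inr i => simp [hf, ht, hvn, hmul, add_comm]
    -- key lemma: strict lower bound on valuation of a sum
    have key : ∀ (m : WithTop ℝ), m ≠ ⊤ → ∀ (s : Finset (Fin n ⊕ Fin n)),
        (∀ j ∈ s, m < v (t j)) → m < v (∑ j ∈ s, t j) := by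
      intro m hm s
      induction s using Finset.induction with
      | empty =>
        intro _
        simpa [hzero] using lt_top_iff_ne_top.mpr hm
      | insert c s' hnot ih =>
        intro h
        rw [Finset.sum_insert hnot]
        refine lt_of_lt_of_le (lt_min (h c (Finset.mem_insert_self c s')) ?_) (hadd _ _)
        exact ih (fun j hj => h j (Finset.mem_insert_of_mem hj))
    rcases isEmpty_or_nonempty (Fin n ⊕ Fin n) with he | hne
    · left; intro l; exact (IsEmpty.false l).elim
    · obtain ⟨l0, -, hl0⟩ := Finset.exists_min_image Finset.univ f
        ⟨Classical.arbitrary _, Finset.mem_univ _⟩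
      by_cases htop : f l0 = ⊤
      · left
        intro l
        exact top_le_iff.mp (htop ▸ hl0 l (Finset.mem_univ l))
      · by_cases hj : ∃ j, j ≠ l0 ∧ f j = f l0
        · obtain ⟨j, hjne, hje⟩ := hj
          right
          exact ⟨l0, j, hjne.symm, hje.symm, fun l => hl0 l (Finset.mem_univ l)⟩
        · push_neg at hj
          exfalso
          have hstrict : ∀ j ∈ Finset.univ.erase l0, f l0 < f j := by
            intro j hj'
            exact lt_of_le_of_ne (hl0 j (Finset.mem_univ j))
              (Ne.symm (hj j (Finset.ne_of_mem_erase hj')))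
          have ht0 : t l0 = -∑ j ∈ Finset.univ.erase l0, t j := by
            have h := hsum
            rw [← Finset.add_sum_erase _ t (Finset.mem_univ l0)] at h
            exact eq_neg_of_add_eq_zero_left h
          have hlt : f l0 < v (t l0) := by
            rw [ht0, hvn]
            exact key (f l0) htop _ (fun j hj' => (hft j) ▸ hstrict j hj')
          rw [hft l0] at hlt
          exact lt_irrefl _ hlt
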